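/- Fix n ≥ 1 and define Φ_j : ℂ^n × ℂ^n → ℂ by Φ_j(a,p) = ∑_{m=j}^{n} (m−j+1) a_{m−j+1} p_m for 1 ≤ j ≤ n. Then the ⌈n/2⌉ functions Φ_{⌊n/2⌋+1}, …, Φ_n are pairwise in involution: for all s, k with ⌊n/2⌋ + 1 ≤ s, k ≤ n, the Poisson bracket {Φ_s, Φ_k} vanishes identically on ℂ^n × ℂ^n. -/

import Mathlib

open Complex

/-- `Φ_j(a,p) = ∑_{m=j}^n (m-j+1) a_{m-j+1} p_m` (1-indexed). -/
noncomputable def Phi {n : ℕ} (j : Fin n) (a p : Fin n → ℂ) : ℂ :=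
  ∑ m : Fin n, if _ : j.1 ≤ m.1 then
    ((m.1 - j.1 + 1 : ℕ) : ℂ) * a ⟨m.1 - j.1, by have := m.isLt; omega⟩ * p m
  else 0

/-- Complex partial derivative of `f(a,p)` in the coordinate `a_k`. -/
noncomputable def pderivA {n : ℕ} (f : (Fin n → ℂ) → (Fin n → ℂ) → ℂ) (k : Fin n)
    (a p : Fin n → ℂ) : ℂ :=
  deriv (fun z => f (Function.update a k z) p) (a k)

/-- Complex partial derivative of `f(a,p)` in the coordinate `p_k`. -/
noncomputable def pderivP {n : ℕ} (f : (Fin n → ℂ) → (Fin n → ℂ) → ℂ) (k : Fin n)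
    (a p : Fin n → ℂ) : ℂ :=
  deriv (fun z => f a (Function.update p k z)) (p k)

/-- The Poisson bracket `{f,g} = ∑_k (∂f/∂a_k ∂g/∂p_k − ∂f/∂p_k ∂g/∂a_k)`. -/
noncomputable def poisson {n : ℕ} (f g : (Fin n → ℂ) → (Fin n → ℂ) → ℂ)
    (a p : Fin n → ℂ) : ℂ :=
  ∑ k : Fin n, (pderivA f k a p * pderivP g k a p - pderivP f k a p * pderivA g k a p)

private lemma hasDerivAt_const_mul_id (c x : ℂ) : HasDerivAt (fun z => c * z) c x := by
  simpa using (hasDerivAt_id x).const_mul c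

lemma pderivA_Phi {n : ℕ} (j i : Fin n) (a p : Fin n → ℂ) :
    pderivA (Phi j) i a p =
      if h : i.1 + j.1 < n then ((i.1 + 1 : ℕ) : ℂ) * p ⟨i.1 + j.1, h⟩ else 0 := by
  have H : HasDerivAt (fun z => Phi j (Function.update a i z) p)
      (∑ m : Fin n, if j.1 ≤ m.1 ∧ m.1 - j.1 = i.1 then
        ((m.1 - j.1 + 1 : ℕ) : ℂ) * p m else 0) (a i) := by
    unfold Phi
    apply HasDerivAt.fun_sum
    intro m _
    by_cases h1 : j.1 ≤ m.1
    · by_cases h2 : m.1 - j.1 = i.1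
      · rw [if_pos (And.intro h1 h2)]
        simp only [dif_pos h1, Function.update_apply, Fin.ext_iff, Fin.val_mk, h2,
          eq_self_iff_true, if_true]
        exact (hasDerivAt_const_mul_id _ (a i)).mul_const (p m)
      · have he : (⟨m.1 - j.1, by have := m.isLt; omega⟩ : Fin n) ≠ i := by
          intro h; exact h2 (congrArg Fin.val h)
        rw [if_neg (fun h : _ ∧ _ => h2 h.2)]
        simp only [dif_pos h1, Function.update_of_ne he]
        exact hasDerivAt_const _ _
    · rw [if_neg (fun h : _ ∧ _ => h1 h.1)]
      simp only [dif_neg h1]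
      exact hasDerivAt_const _ _
  rw [pderivA, H.deriv]
  by_cases hin : i.1 + j.1 < n
  · rw [dif_pos hin, Finset.sum_eq_single (⟨i.1 + j.1, hin⟩ : Fin n)]
    · simp only [Fin.val_mk]
      rw [if_pos (And.intro (by omega) (by omega))]
      congr 2
      omega
    · intro m _ hm
      rw [if_neg]
      rintro ⟨hh1, hh2⟩
      exact hm (Fin.ext (by simp only [Fin.val_mk]; omega))
    · intro h; exact absurd (Finset.mem_univ _) h
  · rw [dif_neg hin]
    apply Finset.sum_eq_zero
    intro m _
    rw [if_neg]
    rintro ⟨hh1, hh2⟩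
    exact hin (by have := m.isLt; omega)

lemma pderivP_Phi {n : ℕ} (j i : Fin n) (a p : Fin n → ℂ) :
    pderivP (Phi j) i a p =
      if h : j.1 ≤ i.1 then
        ((i.1 - j.1 + 1 : ℕ) : ℂ) * a ⟨i.1 - j.1, by have := i.isLt; omega⟩
      else 0 := by
  have H : HasDerivAt (fun z => Phi j a (Function.update p i z))
      (∑ m : Fin n, if m = i ∧ j.1 ≤ m.1 then
        ((m.1 - j.1 + 1 : ℕ) : ℂ) * a ⟨m.1 - j.1, by have := m.isLt; omega⟩ else 0) (p i) := by
    unfold Phi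
    apply HasDerivAt.fun_sum
    intro m _
    by_cases h1 : j.1 ≤ m.1
    · by_cases h2 : m = i
      · subst h2
        rw [if_pos (And.intro rfl h1)]
        simp only [dif_pos h1, Function.update_self]
        exact hasDerivAt_const_mul_id _ (p m)
      · rw [if_neg (fun h : _ ∧ _ => h2 h.1)]
        simp only [dif_pos h1, Function.update_of_ne h2]
        exact hasDerivAt_const _ _
    · rw [if_neg (fun h : _ ∧ _ => h1 h.2)]
      simp only [dif_neg h1]
      exact hasDerivAt_const _ _
  rw [pderivP, H.deriv]
  by_cases hji : j.1 ≤ i.1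
  · rw [dif_pos hji, Finset.sum_eq_single i]
    · rw [if_pos (And.intro rfl hji)]
    · intro m _ hm
      exact if_neg (fun h => hm h.1)
    · intro h; exact absurd (Finset.mem_univ _) h
  · rw [dif_neg hji]
    apply Finset.sum_eq_zero
    intro m _
    rw [if_neg]
    rintro ⟨hh1, hh2⟩
    exact hji (hh1 ▸ hh2)

/-- the functions `Φ_{⌊n/2⌋+1}, …, Φ_n` are pairwise in involution. -/
theorem poisson_Phi_upper_involutive
    (n : ℕ) (hn : 1 ≤ n) (s k : Fin n) (hs : n / 2 ≤ s.1) (hk : n / 2 ≤ k.1) :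
    ∀ a p : Fin n → ℂ, poisson (Phi s) (Phi k) a p = 0 := by
  intro a p
  unfold poisson
  apply Finset.sum_eq_zero
  intro i _
  rw [pderivA_Phi, pderivA_Phi, pderivP_Phi, pderivP_Phi]
  by_cases hsk : s = k
  · subst hsk; ring
  · have hnk : n ≤ s.1 + k.1 := by
      have := s.isLt; have := k.isLt
      have hne : s.1 ≠ k.1 := fun h => hsk (Fin.ext h)
      omega
    have h1 : ¬ (i.1 + s.1 < n) ∨ ¬ (k.1 ≤ i.1) := by omega
    have h2 : ¬ (s.1 ≤ i.1) ∨ ¬ (i.1 + k.1 < n) := by omega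
    rcases h1 with h1 | h1 <;> rcases h2 with h2 | h2 <;>
      rw [dif_neg h1, dif_neg h2] <;> ring
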